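/- Let n ≥ 1 and define, on ℂ[x̂_1,…,x̂_n, ŷ_1,…,ŷ_n, ẑ, q_1,…,q_n], the operators D̂ = Σ_j (i q_j ∂_{x̂_j} − ∂_{ŷ_j}∂_{q_j}) and X̂ = Σ_j (i ŷ_j q_j + x̂_j ∂_{q_j}), and set D₁ = D̂ + (1/2) X̂ ∂_{ẑ} and D₂ = D₁² − (i/4)∂_{ẑ}. Then [D̂, X̂] = −i(Ê + n), where Ê = Σ_j (x̂_j ∂_{x̂_j} + ŷ_j ∂_{ŷ_j}), and consequently D₁² = D̂² + X̂ D̂ ∂_{ẑ} − (i/2)(Ê + n)∂_{ẑ} + (1/4) X̂² ∂_{ẑ}². -/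

import Mathlib

noncomputable section
open MvPolynomial

/-- Variables: x_1..x_n, y_1..y_n, z, q_1..q_n. -/
abbrev V4 (n : ℕ) := Fin n ⊕ Fin n ⊕ Unit ⊕ Fin n
abbrev R4 (n : ℕ) := MvPolynomial (V4 n) ℂ
abbrev Op4 (n : ℕ) := Module.End ℂ (R4 n)

def xv {n : ℕ} (j : Fin n) : V4 n := Sum.inl j
def yv {n : ℕ} (j : Fin n) : V4 n := Sum.inr (Sum.inl j)
def zv {n : ℕ} : V4 n := Sum.inr (Sum.inr (Sum.inl ()))
def qv {n : ℕ} (j : Fin n) : V4 n := Sum.inr (Sum.inr (Sum.inr j))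

def mX {n : ℕ} (j : Fin n) : Op4 n := LinearMap.mulLeft ℂ (X (xv j))
def mY {n : ℕ} (j : Fin n) : Op4 n := LinearMap.mulLeft ℂ (X (yv j))
def mQ {n : ℕ} (j : Fin n) : Op4 n := LinearMap.mulLeft ℂ (X (qv j))
def dX {n : ℕ} (j : Fin n) : Op4 n := (pderiv (xv j)).toLinearMap
def dY {n : ℕ} (j : Fin n) : Op4 n := (pderiv (yv j)).toLinearMap
def dQ {n : ℕ} (j : Fin n) : Op4 n := (pderiv (qv j)).toLinearMap
def dZ (n : ℕ) : Op4 n := (pderiv (zv : V4 n)).toLinearMap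

/-- Euler operators E_x = Σ x_j ∂_{x_j}, E_y = Σ y_j ∂_{y_j}, E_z = z ∂_z. -/
def Ex (n : ℕ) : Op4 n := ∑ j : Fin n, mX j * dX j
def Ey (n : ℕ) : Op4 n := ∑ j : Fin n, mY j * dY j
def Ez (n : ℕ) : Op4 n := LinearMap.mulLeft ℂ (X (zv : V4 n)) * dZ n

/-- The symplectic Dirac operator D_s = Σ_j (i q_j ∂_{y_j} − ∂_{x_j} ∂_{q_j}). -/
def Ds (n : ℕ) : Op4 n := ∑ j : Fin n, (Complex.I • (mQ j * dY j) - dX j * dQ j)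
/-- X_s = Σ_j (i x_j q_j + y_j ∂_{q_j}). -/
def Xs (n : ℕ) : Op4 n := ∑ j : Fin n, (Complex.I • (mX j * mQ j) + mY j * dQ j)

/-- The scalar operator E_x + E_y + E_z − λ + n − 1/2. -/
def Slam (n : ℕ) (lam : ℂ) : Op4 n :=
  Ex n + Ey n + Ez n + ((n : ℂ) - lam - 1/2) • (1 : Op4 n)

/-- d_i = −2 y_i ∂_z + ∂_{x_i}(E_x + E_y + E_z − λ + n − 1/2) + q_i D_s. -/
def dOp (n : ℕ) (lam : ℂ) (i : Fin n) : Op4 n :=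
  (-2 : ℂ) • (mY i * dZ n) + dX i * Slam n lam + mQ i * Ds n

/-- e_i = 2 x_i ∂_z + ∂_{y_i}(E_x + E_y + E_z − λ + n − 1/2) − i ∂_{q_i} D_s. -/
def eOp (n : ℕ) (lam : ℂ) (i : Fin n) : Op4 n :=
  (2 : ℂ) • (mX i * dZ n) + dY i * Slam n lam - Complex.I • (dQ i * Ds n)
/-- D̂ = Σ_j (i q_j ∂_{x̂_j} − ∂_{ŷ_j} ∂_{q_j}). -/
def Dhat (n : ℕ) : Op4 n := ∑ j : Fin n, (Complex.I • (mQ j * dX j) - dY j * dQ j)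
/-- X̂ = Σ_j (i ŷ_j q_j + x̂_j ∂_{q_j}). -/
def Xhat (n : ℕ) : Op4 n := ∑ j : Fin n, (Complex.I • (mY j * mQ j) + mX j * dQ j)
/-- The first-order contact symplectic Dirac operator D₁ = D̂ + (1/2) X̂ ∂_ẑ. -/
def D1 (n : ℕ) : Op4 n := Dhat n + (1/2 : ℂ) • (Xhat n * dZ n)

section Aux

variable {n : ℕ}

private lemma d_mul_m (v w : V4 n) :
    ((pderiv v).toLinearMap : Op4 n) * LinearMap.mulLeft ℂ (X w)
      = LinearMap.mulLeft ℂ (X w) * (pderiv v).toLinearMap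
        + (if w = v then 1 else 0) := by
  apply LinearMap.ext; intro f
  by_cases h : w = v
  · subst h
    simp [Module.End.mul_apply, pderiv_mul, add_comm]
  · simp [Module.End.mul_apply, pderiv_mul, pderiv_X_of_ne h, h]

private lemma m_comm (p q : R4 n) :
    (LinearMap.mulLeft ℂ p : Op4 n) * LinearMap.mulLeft ℂ q
      = LinearMap.mulLeft ℂ q * LinearMap.mulLeft ℂ p := by
  apply LinearMap.ext; intro f
  simp only [Module.End.mul_apply, LinearMap.mulLeft_apply]
  ring

private lemma pd_comm (v w : V4 n) (f : R4 n) :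
    pderiv v (pderiv w f) = pderiv w (pderiv v f) := by
  induction f using MvPolynomial.induction_on with
  | C a => simp
  | add p q hp hq => simp [hp, hq]
  | mul_X p i hp =>
      have h1 : (pderiv v) ((pderiv w) (X i : R4 n)) = 0 := by
        rcases eq_or_ne w i with h | h
        · subst h; simp
        · simp [pderiv_X_of_ne (Ne.symm h)]
      have h2 : (pderiv w) ((pderiv v) (X i : R4 n)) = 0 := by
        rcases eq_or_ne v i with h | h
        · subst h; simp
        · simp [pderiv_X_of_ne (Ne.symm h)]
      simp only [pderiv_mul, map_add, h1, h2, hp, mul_zero, add_zero, map_mul]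
      ring

private lemma d_comm (v w : V4 n) :
    ((pderiv v).toLinearMap : Op4 n) * (pderiv w).toLinearMap
      = (pderiv w).toLinearMap * (pderiv v).toLinearMap := by
  apply LinearMap.ext; intro f
  exact pd_comm v w f

private lemma swap3 {R : Type*} [Ring R] {a b : R} (h : a * b = b * a) (c : R) :
    a * (b * c) = b * (a * c) := by rw [← mul_assoc, h, mul_assoc]

private lemma dswap3 {a b : Op4 n} (h : a * b = b * a + 1) (c : Op4 n) :
    a * (b * c) = b * (a * c) + c := by
  rw [← mul_assoc, h, add_mul, one_mul, mul_assoc]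

-- distinctness of variables
private lemma xv_ne_yv (j k : Fin n) : (yv k : V4 n) ≠ xv j := by simp [xv, yv]
private lemma qv_ne_xv (j k : Fin n) : (xv k : V4 n) ≠ qv j := by simp [xv, qv]
private lemma qv_ne_yv (j k : Fin n) : (yv k : V4 n) ≠ qv j := by simp [yv, qv]

-- canonical ordering rewrites (same index, noncommuting pairs)
private lemma dX_mX (j : Fin n) : dX j * mX j = mX j * dX j + 1 := by
  simpa [dX, mX] using d_mul_m (xv j) (xv j)
private lemma dY_mY (j : Fin n) : dY j * mY j = mY j * dY j + 1 := by
  simpa [dY, mY] using d_mul_m (yv j) (yv j)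
private lemma dQ_mQ (j : Fin n) : dQ j * mQ j = mQ j * dQ j + 1 := by
  simpa [dQ, mQ] using d_mul_m (qv j) (qv j)
private lemma dX_mX' (j : Fin n) (c : Op4 n) :
    dX j * (mX j * c) = mX j * (dX j * c) + c := dswap3 (dX_mX j) c
private lemma dY_mY' (j : Fin n) (c : Op4 n) :
    dY j * (mY j * c) = mY j * (dY j * c) + c := dswap3 (dY_mY j) c
private lemma dQ_mQ' (j : Fin n) (c : Op4 n) :
    dQ j * (mQ j * c) = mQ j * (dQ j * c) + c := dswap3 (dQ_mQ j) c

-- same family, distinct indices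
private lemma dX_mX_ne {j k : Fin n} (h : j ≠ k) : dX j * mX k = mX k * dX j := by
  have := d_mul_m (xv j) (xv k)
  simpa [dX, mX, xv, Sum.inl.injEq, (h.symm : k ≠ j)] using this
private lemma dY_mY_ne {j k : Fin n} (h : j ≠ k) : dY j * mY k = mY k * dY j := by
  have := d_mul_m (yv j) (yv k)
  simpa [dY, mY, yv, (h.symm : k ≠ j)] using this
private lemma dQ_mQ_ne {j k : Fin n} (h : j ≠ k) : dQ j * mQ k = mQ k * dQ j := by
  have := d_mul_m (qv j) (qv k)
  simpa [dQ, mQ, qv, (h.symm : k ≠ j)] using this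

-- cross-family commutations, oriented: m's before d's, order mX < mY < mQ, dX < dY < dQ
private lemma dX_mY (j k : Fin n) : dX j * mY k = mY k * dX j := by
  simpa [dX, mY, xv_ne_yv] using d_mul_m (xv j) (yv k)
private lemma dX_mQ (j k : Fin n) : dX j * mQ k = mQ k * dX j := by
  have := d_mul_m (xv j) (qv k)
  simpa [dX, mQ, show (qv k : V4 n) ≠ xv j by simp [xv, qv]] using this
private lemma dY_mX (j k : Fin n) : dY j * mX k = mX k * dY j := by
  have := d_mul_m (yv j) (xv k)
  simpa [dY, mX, show (xv k : V4 n) ≠ yv j by simp [xv, yv]] using this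
private lemma dY_mQ (j k : Fin n) : dY j * mQ k = mQ k * dY j := by
  have := d_mul_m (yv j) (qv k)
  simpa [dY, mQ, show (qv k : V4 n) ≠ yv j by simp [yv, qv]] using this
private lemma dQ_mX (j k : Fin n) : dQ j * mX k = mX k * dQ j := by
  simpa [dQ, mX, qv_ne_xv] using d_mul_m (qv j) (xv k)
private lemma dQ_mY (j k : Fin n) : dQ j * mY k = mY k * dQ j := by
  simpa [dQ, mY, qv_ne_yv] using d_mul_m (qv j) (yv k)

private lemma mY_mX (j k : Fin n) : mY j * mX k = mX k * mY j := m_comm _ _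
private lemma mQ_mX (j k : Fin n) : mQ j * mX k = mX k * mQ j := m_comm _ _
private lemma mQ_mY (j k : Fin n) : mQ j * mY k = mY k * mQ j := m_comm _ _
private lemma dY_dX (j k : Fin n) : dY j * dX k = dX k * dY j := d_comm _ _
private lemma dQ_dX (j k : Fin n) : dQ j * dX k = dX k * dQ j := d_comm _ _
private lemma dQ_dY (j k : Fin n) : dQ j * dY k = dY k * dQ j := d_comm _ _

-- assoc variants
private lemma dX_mY' (j k : Fin n) (c : Op4 n) :
    dX j * (mY k * c) = mY k * (dX j * c) := swap3 (dX_mY j k) c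
private lemma dX_mQ' (j k : Fin n) (c : Op4 n) :
    dX j * (mQ k * c) = mQ k * (dX j * c) := swap3 (dX_mQ j k) c
private lemma dY_mX' (j k : Fin n) (c : Op4 n) :
    dY j * (mX k * c) = mX k * (dY j * c) := swap3 (dY_mX j k) c
private lemma dY_mQ' (j k : Fin n) (c : Op4 n) :
    dY j * (mQ k * c) = mQ k * (dY j * c) := swap3 (dY_mQ j k) c
private lemma dQ_mX' (j k : Fin n) (c : Op4 n) :
    dQ j * (mX k * c) = mX k * (dQ j * c) := swap3 (dQ_mX j k) c
private lemma dQ_mY' (j k : Fin n) (c : Op4 n) :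
    dQ j * (mY k * c) = mY k * (dQ j * c) := swap3 (dQ_mY j k) c
private lemma mY_mX' (j k : Fin n) (c : Op4 n) :
    mY j * (mX k * c) = mX k * (mY j * c) := swap3 (mY_mX j k) c
private lemma mQ_mX' (j k : Fin n) (c : Op4 n) :
    mQ j * (mX k * c) = mX k * (mQ j * c) := swap3 (mQ_mX j k) c
private lemma mQ_mY' (j k : Fin n) (c : Op4 n) :
    mQ j * (mY k * c) = mY k * (mQ j * c) := swap3 (mQ_mY j k) c
private lemma dY_dX' (j k : Fin n) (c : Op4 n) :
    dY j * (dX k * c) = dX k * (dY j * c) := swap3 (dY_dX j k) c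
private lemma dQ_dX' (j k : Fin n) (c : Op4 n) :
    dQ j * (dX k * c) = dX k * (dQ j * c) := swap3 (dQ_dX j k) c
private lemma dQ_dY' (j k : Fin n) (c : Op4 n) :
    dQ j * (dY k * c) = dY k * (dQ j * c) := swap3 (dQ_dY j k) c

private lemma bracket_diag (j : Fin n) :
    (Complex.I • (mQ j * dX j) - dY j * dQ j) * (Complex.I • (mY j * mQ j) + mX j * dQ j)
      - (Complex.I • (mY j * mQ j) + mX j * dQ j) * (Complex.I • (mQ j * dX j) - dY j * dQ j)
      = (-(Complex.I)) • (mX j * dX j + mY j * dY j + 1) := by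
  simp only [mul_add, add_mul, mul_sub, sub_mul, smul_mul_assoc, mul_smul_comm,
    smul_smul, Complex.I_mul_I, neg_smul, one_smul, smul_add, smul_sub, mul_assoc,
    dX_mX, dY_mY, dQ_mQ, dX_mX', dY_mY', dQ_mQ',
    dX_mY, dX_mQ, dY_mX, dY_mQ, dQ_mX, dQ_mY,
    dX_mY', dX_mQ', dY_mX', dY_mQ', dQ_mX', dQ_mY',
    mY_mX, mQ_mX, mQ_mY, mY_mX', mQ_mX', mQ_mY',
    dY_dX, dQ_dX, dQ_dY, dY_dX', dQ_dX', dQ_dY',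
    mul_one, one_mul]
  abel

private lemma commute4 {R : Type*} [Ring R] {a b c d : R}
    (h1 : Commute a c) (h2 : Commute a d) (h3 : Commute b c) (h4 : Commute b d) :
    Commute (a * b) (c * d) :=
  (h1.mul_right h2).mul_left (h3.mul_right h4)

private lemma bracket_ne {j k : Fin n} (h : j ≠ k) :
    (Complex.I • (mQ j * dX j) - dY j * dQ j) * (Complex.I • (mY k * mQ k) + mX k * dQ k)
      = (Complex.I • (mY k * mQ k) + mX k * dQ k)
          * (Complex.I • (mQ j * dX j) - dY j * dQ j) := by
  have c1 : Commute (mQ j * dX j) (mY k * mQ k) :=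
    commute4 (mQ_mY j k) (m_comm _ _) (dX_mY j k) (dX_mQ j k)
  have c2 : Commute (mQ j * dX j) (mX k * dQ k) :=
    commute4 (mQ_mX j k) ((dQ_mQ_ne h.symm).symm) (dX_mX_ne h) (d_comm _ _)
  have c3 : Commute (dY j * dQ j) (mY k * mQ k) :=
    commute4 (dY_mY_ne h) (dY_mQ j k) (dQ_mY j k) (dQ_mQ_ne h)
  have c4 : Commute (dY j * dQ j) (mX k * dQ k) :=
    commute4 (dY_mX j k) (d_comm _ _) (dQ_mX j k) (d_comm _ _)
  have hA : Commute (Complex.I • (mQ j * dX j) - dY j * dQ j)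
      (Complex.I • (mY k * mQ k)) := ((c1.smul_left Complex.I).smul_right Complex.I).sub_left
        (c3.smul_right Complex.I)
  have hB : Commute (Complex.I • (mQ j * dX j) - dY j * dQ j)
      (mX k * dQ k) := (c2.smul_left Complex.I).sub_left c4
  exact (hA.add_right hB).eq

private lemma dZ_comm_Dhat : dZ n * Dhat n = Dhat n * dZ n := by
  unfold Dhat
  rw [Finset.mul_sum, Finset.sum_mul]
  refine Finset.sum_congr rfl fun j _ => ?_
  have h1 : dZ n * (mQ j * dX j) = (mQ j * dX j) * dZ n := by
    have hm : dZ n * mQ j = mQ j * dZ n := by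
      have := d_mul_m (zv : V4 n) (qv j)
      simpa [dZ, mQ, show (qv j : V4 n) ≠ zv by simp [zv, qv]] using this
    have hd : dZ n * dX j = dX j * dZ n := d_comm _ _
    rw [← mul_assoc, hm, mul_assoc, hd, ← mul_assoc]
  have h2 : dZ n * (dY j * dQ j) = (dY j * dQ j) * dZ n := by
    have hd1 : dZ n * dY j = dY j * dZ n := d_comm _ _
    have hd2 : dZ n * dQ j = dQ j * dZ n := d_comm _ _
    rw [← mul_assoc, hd1, mul_assoc, hd2, ← mul_assoc]
  rw [mul_sub, sub_mul, mul_smul_comm, smul_mul_assoc, h1, h2]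

private lemma dZ_comm_Xhat : dZ n * Xhat n = Xhat n * dZ n := by
  unfold Xhat
  rw [Finset.mul_sum, Finset.sum_mul]
  refine Finset.sum_congr rfl fun j _ => ?_
  have hmy : dZ n * mY j = mY j * dZ n := by
    have := d_mul_m (zv : V4 n) (yv j)
    simpa [dZ, mY, show (yv j : V4 n) ≠ zv by simp [zv, yv]] using this
  have hmq : dZ n * mQ j = mQ j * dZ n := by
    have := d_mul_m (zv : V4 n) (qv j)
    simpa [dZ, mQ, show (qv j : V4 n) ≠ zv by simp [zv, qv]] using this
  have hmx : dZ n * mX j = mX j * dZ n := by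
    have := d_mul_m (zv : V4 n) (xv j)
    simpa [dZ, mX, show (xv j : V4 n) ≠ zv by simp [zv, xv]] using this
  have h1 : dZ n * (mY j * mQ j) = (mY j * mQ j) * dZ n := by
    rw [← mul_assoc, hmy, mul_assoc, hmq, ← mul_assoc]
  have h2 : dZ n * (mX j * dQ j) = (mX j * dQ j) * dZ n := by
    have hdq : dZ n * dQ j = dQ j * dZ n := d_comm _ _
    rw [← mul_assoc, hmx, mul_assoc, hdq, ← mul_assoc]
  rw [mul_add, add_mul, mul_smul_comm, smul_mul_assoc, h1, h2]

end Aux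

/-- [D̂, X̂] = −i(Ê + n), and consequently
D₁² = D̂² + X̂ D̂ ∂_ẑ − (i/2)(Ê + n)∂_ẑ + (1/4) X̂² ∂_ẑ². -/
theorem Dhat_Xhat_commutator_and_D1_sq (n : ℕ) (hn : 1 ≤ n) :
    (Dhat n * Xhat n - Xhat n * Dhat n
        = (-(Complex.I)) • (Ex n + Ey n + (n : Op4 n))) ∧
    D1 n ^ 2 = Dhat n ^ 2 + Xhat n * Dhat n * dZ n
        - (Complex.I / 2) • ((Ex n + Ey n + (n : Op4 n)) * dZ n)
        + (1/4 : ℂ) • (Xhat n ^ 2 * dZ n ^ 2) := by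
  classical
  have hcast : ((n : ℕ) : Op4 n) = ∑ _j : Fin n, (1 : Op4 n) := by
    simp [Finset.sum_const, nsmul_eq_mul]
  have part1 : Dhat n * Xhat n - Xhat n * Dhat n
      = (-(Complex.I)) • (Ex n + Ey n + (n : Op4 n)) := by
    unfold Dhat Xhat
    rw [Finset.sum_mul_sum, Finset.sum_mul_sum, Finset.sum_comm (s := Finset.univ)
      (t := Finset.univ), ← Finset.sum_sub_distrib]
    have step : ∀ k : Fin n,
        (∑ j : Fin n, ((Complex.I • (mQ j * dX j) - dY j * dQ j)
            * (Complex.I • (mY k * mQ k) + mX k * dQ k))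
          - ∑ j : Fin n, ((Complex.I • (mY k * mQ k) + mX k * dQ k)
            * (Complex.I • (mQ j * dX j) - dY j * dQ j)))
          = (-(Complex.I)) • (mX k * dX k + mY k * dY k + 1) := by
      intro k
      rw [← Finset.sum_sub_distrib]
      have key : ∀ j : Fin n,
          ((Complex.I • (mQ j * dX j) - dY j * dQ j)
              * (Complex.I • (mY k * mQ k) + mX k * dQ k)
            - (Complex.I • (mY k * mQ k) + mX k * dQ k)
              * (Complex.I • (mQ j * dX j) - dY j * dQ j))
          = if j = k then (-(Complex.I)) • (mX k * dX k + mY k * dY k + 1) else 0 := by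
        intro j
        rcases eq_or_ne j k with h | h
        · subst h; rw [if_pos rfl]; exact bracket_diag j
        · rw [if_neg h]
          exact sub_eq_zero.mpr (bracket_ne h)
      rw [Finset.sum_congr rfl fun j _ => key j]
      simp
    rw [Finset.sum_congr rfl fun k _ => step k, ← Finset.smul_sum]
    congr 1
    rw [Finset.sum_add_distrib, Finset.sum_add_distrib, hcast]
    rfl
  refine ⟨part1, ?_⟩
  have hDX : Dhat n * Xhat n
      = Xhat n * Dhat n + (-(Complex.I)) • (Ex n + Ey n + (n : Op4 n)) := by
    rw [← part1]; abel
  have hZD := dZ_comm_Dhat (n := n)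
  have hZX := dZ_comm_Xhat (n := n)
  rw [D1, pow_two]
  rw [mul_add, add_mul, add_mul, mul_smul_comm, smul_mul_assoc, smul_mul_assoc,
    mul_smul_comm, smul_smul]
  have e1 : Dhat n * (Xhat n * dZ n) = Xhat n * Dhat n * dZ n
      + (-(Complex.I)) • ((Ex n + Ey n + (n : Op4 n)) * dZ n) := by
    rw [← mul_assoc, hDX, add_mul, smul_mul_assoc]
  have e2 : Xhat n * dZ n * Dhat n = Xhat n * Dhat n * dZ n := by
    rw [mul_assoc, hZD, ← mul_assoc]
  have e3 : Xhat n * dZ n * (Xhat n * dZ n) = Xhat n ^ 2 * dZ n ^ 2 := by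
    rw [mul_assoc, ← mul_assoc (dZ n), hZX, pow_two, pow_two]
    rw [mul_assoc, mul_assoc]
  rw [e1, e2, e3, ← pow_two (Dhat n)]
  match_scalars <;> ring
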